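/- Let (Ω, F, P) be a probability space, (E, d) a metric space, and X, X_n : Ω → E measurable maps. Suppose (a) for every ε > 0, the outer probability P*(d(X, X_n) ≥ ε) → 0 as n → ∞, and (b) P_{X_n}(O) → P_X(O) for every open set O ⊆ E. Then for every bounded measurable function f : E → ℝ, E|f(X) − f(X_n)| → 0 as n → ∞. -/

import Mathlib

open MeasureTheory Filter Topology Metric ENNReal


lemma lemA
    {Ω : Type*} [MeasurableSpace Ω] (P : Measure Ω) [IsProbabilityMeasure P]
    {E : Type*} [MetricSpace E] [MeasurableSpace E] [BorelSpace E]
    (X : Ω → E) (Xn : ℕ → Ω → E)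
    (hX : Measurable X) (hXn : ∀ n, Measurable (Xn n))
    (ha : ∀ ε > (0 : ℝ),
      Tendsto (fun n => P {ω | ε ≤ dist (X ω) (Xn n ω)}) atTop (𝓝 0))
    (hb : ∀ O : Set E, IsOpen O →
      Tendsto (fun n => Measure.map (Xn n) P O) atTop (𝓝 (Measure.map X P O)))
    {B : Set E} (hB : MeasurableSet B) :
    Tendsto (fun n => P {ω | X ω ∈ B ∧ Xn n ω ∉ B}) atTop (𝓝 0) := by
  rw [ENNReal.tendsto_atTop_zero]
  intro ε hε
  set μ := Measure.map X P with hμdef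
  have hμprob : IsProbabilityMeasure μ := Measure.isProbabilityMeasure_map hX.aemeasurable
  have hμnprob : ∀ n, IsProbabilityMeasure (Measure.map (Xn n) P) :=
    fun n => Measure.isProbabilityMeasure_map (hXn n).aemeasurable
  set η : ℝ≥0∞ := min (ε / 5) 1 with hηdef
  have hη0 : η ≠ 0 := by
    simp only [hηdef, ne_eq, min_eq_iff]
    push_neg
    constructor <;> intro h <;> simp_all [ENNReal.div_eq_zero_iff]
  have hη4 : η + (η + (η + η)) ≤ ε := by
    rcases min_cases (ε / 5) 1 with ⟨h1, h2⟩ | ⟨h1, h2⟩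
    · rw [hηdef, h1]
      calc ε/5 + (ε/5 + (ε/5 + ε/5)) = ε/5 * 4 := by ring
      _ ≤ ε/5 * 5 := by gcongr <;> norm_num
      _ = ε := by
        rw [ENNReal.div_mul_cancel] <;> norm_num
    · rw [hηdef, h1]
      have h5 : (5 : ℝ≥0∞) ≤ ε := by
        calc (5:ℝ≥0∞) = 5 * 1 := by norm_num
        _ ≤ 5 * (ε/5) := by gcongr
        _ = ε := ENNReal.mul_div_cancel' (by norm_num) (by norm_num)
      calc (1:ℝ≥0∞) + (1 + (1 + 1)) = 4 := by norm_num
      _ ≤ 5 := by norm_num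
      _ ≤ ε := h5
  -- inner regular closed set
  obtain ⟨F, hFB, hFclosed, hμBF⟩ := hB.exists_isClosed_lt_add (μ := μ)
    (measure_ne_top μ B) hη0
  have hμdiff : μ (B \ F) ≤ η := by
    rw [measure_diff hFB hFclosed.measurableSet.nullMeasurableSet (measure_ne_top μ F)]
    exact tsub_le_iff_right.2 (by rw [add_comm]; exact hμBF.le)
  -- choose thickening radius δ
  have hthick : Tendsto (fun r => μ (thickening r F)) (𝓝[>] 0) (𝓝 (μ F)) :=
    tendsto_measure_thickening_of_isClosed ⟨1, one_pos, measure_ne_top μ _⟩ hFclosed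
  have hlt : μ F < μ F + η := ENNReal.lt_add_right (measure_ne_top μ F) hη0
  obtain ⟨δ, hδT, hδ0⟩ := ((hthick.eventually_lt_const hlt).and self_mem_nhdsWithin).exists
  set T := thickening δ F with hTdef
  have hTopen : IsOpen T := isOpen_thickening
  have hFT : F ⊆ T := self_subset_thickening hδ0 F
  -- convergence of μ_n on T and on F
  have hTn : ∀ᶠ n in atTop, Measure.map (Xn n) P T < μ F + η :=
    (hb T hTopen).eventually_lt_const hδT
  have hFcomp : Tendsto (fun n => Measure.map (Xn n) P F) atTop (𝓝 (μ F)) := by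
    have hFc : IsOpen Fᶜ := hFclosed.isOpen_compl
    have h1 : ∀ n, Measure.map (Xn n) P F = 1 - Measure.map (Xn n) P Fᶜ := by
      intro n
      have := hμnprob n
      rw [prob_compl_eq_one_sub hFclosed.measurableSet]
      exact (ENNReal.sub_sub_cancel ENNReal.one_ne_top prob_le_one).symm
    have h2 : μ F = 1 - μ Fᶜ := by
      rw [prob_compl_eq_one_sub hFclosed.measurableSet]
      exact (ENNReal.sub_sub_cancel ENNReal.one_ne_top prob_le_one).symm
    simp only [h1, h2]
    exact ENNReal.Tendsto.sub tendsto_const_nhds (hb Fᶜ hFc) (Or.inl ENNReal.one_ne_top)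
  have hFn : ∀ᶠ n in atTop, μ F < Measure.map (Xn n) P F + η := by
    have : Tendsto (fun n => Measure.map (Xn n) P F + η) atTop (𝓝 (μ F + η)) :=
      hFcomp.add tendsto_const_nhds
    exact this.eventually_const_lt hlt
  -- convergence in probability term
  have hdist : ∀ᶠ n in atTop, P {ω | δ ≤ dist (X ω) (Xn n ω)} < η :=
    (ha δ hδ0).eventually_lt_const (pos_iff_ne_zero.2 hη0)
  obtain ⟨N, hN⟩ := eventually_atTop.1 (hTn.and (hFn.and hdist))
  refine ⟨N, fun n hn => ?_⟩
  obtain ⟨h1, h2, h3⟩ := hN n hn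
  -- set inclusion
  have hincl : {ω | X ω ∈ B ∧ Xn n ω ∉ B} ⊆
      X ⁻¹' (B \ F) ∪ ({ω | δ ≤ dist (X ω) (Xn n ω)} ∪ Xn n ⁻¹' (T \ F)) := by
    rintro ω ⟨hXB, hXnB⟩
    by_cases hXF : X ω ∈ F
    · by_cases hd : δ ≤ dist (X ω) (Xn n ω)
      · exact Or.inr (Or.inl hd)
      · push_neg at hd
        refine Or.inr (Or.inr ⟨?_, fun hF => hXnB (hFB hF)⟩)
        rw [hTdef, mem_thickening_iff]
        exact ⟨X ω, hXF, by rwa [dist_comm]⟩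
    · exact Or.inl ⟨hXB, hXF⟩
  calc P {ω | X ω ∈ B ∧ Xn n ω ∉ B}
      ≤ P (X ⁻¹' (B \ F)) + (P {ω | δ ≤ dist (X ω) (Xn n ω)} + P (Xn n ⁻¹' (T \ F))) := by
        exact le_trans (measure_mono hincl) (le_trans (measure_union_le _ _)
          (by gcongr; exact measure_union_le _ _))
    _ ≤ η + (η + (η + η)) := by
        refine add_le_add ?_ (add_le_add ?_ ?_)
        · rw [← Measure.map_apply hX (hB.diff hFclosed.measurableSet)]
          exact hμdiff
        · exact h3.le
        · -- μ_n (T \ F) ≤ η + η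
          rw [← Measure.map_apply (hXn n) ((hTopen.measurableSet).diff hFclosed.measurableSet)]
          rw [measure_diff hFT hFclosed.measurableSet.nullMeasurableSet (measure_ne_top _ _)]
          refine tsub_le_iff_right.2 ?_
          calc Measure.map (Xn n) P T ≤ μ F + η := h1.le
            _ ≤ (Measure.map (Xn n) P F + η) + η := by gcongr
            _ = η + η + Measure.map (Xn n) P F := by ring
    _ ≤ ε := hη4

/-- convergence in outer probability plus setwise convergence of the
distributions on open sets implies `E|f(X) - f(Xn)| → 0` for every bounded
measurable `f`. -/
theorem stmt_0
    {Ω : Type*} [MeasurableSpace Ω] (P : Measure Ω) [IsProbabilityMeasure P]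
    {E : Type*} [MetricSpace E] [MeasurableSpace E] [BorelSpace E]
    (X : Ω → E) (Xn : ℕ → Ω → E)
    (hX : Measurable X) (hXn : ∀ n, Measurable (Xn n))
    (ha : ∀ ε > (0 : ℝ),
      Tendsto (fun n => P {ω | ε ≤ dist (X ω) (Xn n ω)}) atTop (𝓝 0))
    (hb : ∀ O : Set E, IsOpen O →
      Tendsto (fun n => Measure.map (Xn n) P O) atTop (𝓝 (Measure.map X P O))) :
    ∀ f : E → ℝ, Measurable f → (∃ C : ℝ, ∀ x, |f x| ≤ C) →
      Tendsto (fun n => ∫ ω, |f (X ω) - f (Xn n ω)| ∂P) atTop (𝓝 0) := by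
  rintro f hf ⟨C, hC⟩
  have hΩ : Nonempty Ω := by
    by_contra h
    rw [not_nonempty_iff] at h
    have h1 : P Set.univ = 1 := measure_univ
    rw [Set.univ_eq_empty_iff.2 h] at h1
    simp at h1
  have hC0 : 0 ≤ C := le_trans (abs_nonneg _) (hC (X hΩ.some))
  rw [Metric.tendsto_atTop]
  intro ε hε
  set w : ℝ := ε / 4 with hw
  have hw0 : 0 < w := by positivity
  set Z : E → ℤ := fun x => ⌊f x / w⌋ with hZdef
  have hZmeas : Measurable Z := (hf.div_const w).floor
  have hfs : ∀ x, |f x - w * Z x| ≤ w := by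
    intro x
    have h1 : ((Z x : ℝ)) * w ≤ f x := (le_div_iff₀ hw0).1 (Int.floor_le _)
    have h2 : f x < ((Z x : ℝ) + 1) * w := (div_lt_iff₀ hw0).1 (Int.lt_floor_add_one _)
    rw [abs_le]
    constructor <;> nlinarith
  set k₀ : ℤ := ⌈C / w⌉ + 1 with hk₀
  set K : Finset ℤ := Finset.Icc (-k₀) k₀ with hK
  have hZK : ∀ x, Z x ∈ K := by
    intro x
    have hb1 : f x / w ≤ C / w := by
      gcongr
      exact le_trans (le_abs_self _) (hC x)
    have hb2 : -(C / w) ≤ f x / w := by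
      rw [← neg_div]
      gcongr
      exact neg_le_of_abs_le (hC x)
    rw [hK, Finset.mem_Icc]
    constructor
    · calc -k₀ ≤ -⌈C / w⌉ := by omega
        _ = ⌊-(C / w)⌋ := (Int.floor_neg).symm
        _ ≤ Z x := Int.floor_le_floor hb2
    · calc Z x ≤ ⌊C / w⌋ := Int.floor_le_floor hb1
        _ ≤ ⌈C / w⌉ := Int.floor_le_ceil _
        _ ≤ k₀ := by omega
  -- the bad event
  set A : ℕ → Set Ω := fun n => {ω | Z (X ω) ≠ Z (Xn n ω)} with hA
  have hAmeas : ∀ n, MeasurableSet (A n) :=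
    fun n => (measurableSet_eq_fun (hZmeas.comp hX)
      (hZmeas.comp (hXn n))).compl
  have hPA : Tendsto (fun n => P (A n)) atTop (𝓝 0) := by
    have hincl : ∀ n, A n ⊆ ⋃ k ∈ K, {ω | X ω ∈ Z ⁻¹' {k} ∧ Xn n ω ∉ Z ⁻¹' {k}} := by
      intro n ω hω
      refine Set.mem_biUnion (hZK (X ω)) ?_
      exact ⟨rfl, fun hmem => hω (by simpa using hmem.symm)⟩
    have hsum : Tendsto (fun n => ∑ k ∈ K, P {ω | X ω ∈ Z ⁻¹' {k} ∧ Xn n ω ∉ Z ⁻¹' {k}})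
        atTop (𝓝 0) := by
      have := tendsto_finset_sum K (fun k _ =>
        lemA P X Xn hX hXn ha hb (hZmeas (measurableSet_singleton k)))
      simpa using this
    exact tendsto_of_tendsto_of_tendsto_of_le_of_le tendsto_const_nhds hsum
      (fun n => zero_le)
      (fun n => le_trans (measure_mono (hincl n)) (measure_biUnion_finset_le _ _))
  have hPAr : Tendsto (fun n => (P (A n)).toReal) atTop (𝓝 0) := by
    have := (ENNReal.tendsto_toReal (a := 0) (by simp)).comp hPA
    simpa [Function.comp_def] using this
  have hmul : Tendsto (fun n => (2*C + 2*w) * (P (A n)).toReal) atTop (𝓝 0) := by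
    simpa using hPAr.const_mul (2*C + 2*w)
  have hev : ∀ᶠ n in atTop, (2*C + 2*w) * (P (A n)).toReal < ε / 2 :=
    hmul.eventually_lt_const (by positivity)
  obtain ⟨N, hN⟩ := eventually_atTop.1 hev
  refine ⟨N, fun n hn => ?_⟩
  -- pointwise bound
  have hptwise : ∀ ω, |f (X ω) - f (Xn n ω)| ≤
      2*w + (2*C + 2*w) * Set.indicator (A n) (fun _ => (1:ℝ)) ω := by
    intro ω
    by_cases hZeq : Z (X ω) = Z (Xn n ω)
    · have hind : Set.indicator (A n) (fun _ => (1:ℝ)) ω = 0 := by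
        apply Set.indicator_of_notMem
        simpa [hA] using hZeq
      rw [hind, mul_zero, add_zero]
      have e1 := hfs (X ω)
      have e2 := hfs (Xn n ω)
      rw [abs_le] at e1 e2 ⊢
      rw [hZeq] at e1
      constructor <;> [skip; skip] <;> · obtain ⟨a1, a2⟩ := e1; obtain ⟨b1, b2⟩ := e2; linarith
    · have hind : Set.indicator (A n) (fun _ => (1:ℝ)) ω = 1 :=
        Set.indicator_of_mem (by simpa [hA] using hZeq) _
      rw [hind, mul_one]
      calc |f (X ω) - f (Xn n ω)| ≤ |f (X ω)| + |f (Xn n ω)| := abs_sub _ _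
        _ ≤ 2*C := by linarith [hC (X ω), hC (Xn n ω)]
        _ ≤ 2*w + (2*C + 2*w) := by linarith
  -- integrability
  have hmeas1 : Measurable (fun ω => |f (X ω) - f (Xn n ω)|) :=
    ((hf.comp hX).sub (hf.comp (hXn n))).abs
  have hint1 : Integrable (fun ω => |f (X ω) - f (Xn n ω)|) P := by
    refine Integrable.mono' (integrable_const (2*C)) hmeas1.aestronglyMeasurable ?_
    refine ae_of_all _ fun ω => ?_
    rw [Real.norm_eq_abs, abs_abs]
    calc |f (X ω) - f (Xn n ω)| ≤ |f (X ω)| + |f (Xn n ω)| := abs_sub _ _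
      _ ≤ 2*C := by linarith [hC (X ω), hC (Xn n ω)]
  have hint2 : Integrable (fun ω => 2*w + (2*C + 2*w) *
      Set.indicator (A n) (fun _ => (1:ℝ)) ω) P := by
    refine (integrable_const (2*w)).add ?_
    exact (((integrable_const (1:ℝ)).indicator (hAmeas n)).const_mul _)
  have hintval : ∫ ω, (2*w + (2*C + 2*w) * Set.indicator (A n) (fun _ => (1:ℝ)) ω) ∂P
      = 2*w + (2*C + 2*w) * (P (A n)).toReal := by
    rw [integral_add (integrable_const _)
      (((integrable_const (1:ℝ)).indicator (hAmeas n)).const_mul _),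
      integral_const, probReal_univ, one_smul,
      integral_const_mul, integral_indicator_const _ (hAmeas n), smul_eq_mul, mul_one, Measure.real]
  rw [Real.dist_eq, sub_zero,
    abs_of_nonneg (integral_nonneg (fun ω => abs_nonneg _))]
  calc ∫ ω, |f (X ω) - f (Xn n ω)| ∂P
      ≤ ∫ ω, (2*w + (2*C + 2*w) * Set.indicator (A n) (fun _ => (1:ℝ)) ω) ∂P :=
        integral_mono hint1 hint2 hptwise
    _ = 2*w + (2*C + 2*w) * (P (A n)).toReal := hintval
    _ < 2*w + ε/2 := by linarith [hN n hn]
    _ = ε := by rw [hw]; ring
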